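/- For all integers α ≥ 2 and n ≥ 2, the quantity r_α(n) satisfies the recursion r_α(n) = Σ_{γ=0}^{α−1} (1/γ!) · Σ* ∏_{i=1}^{γ} r_α(n_i), where Σ* is the sum over all ordered tuples (n₁, …, n_γ) of integers with each n_i ≥ 2 and n₁ + ⋯ + n_γ = n + γ − 2 (for γ = 0 the term is 1 if n = 2 and 0 otherwise). -/

import Mathlib

open Finset

open PowerSeries

/-- The number `r_α(n)` of combinatorially inequivalent rooted tree graphs with
`n` vertices, root of coordination number 1, and all coordination numbers at
most `α`, given by the paper's closed (Cayley-type) formula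
`r_α(n) = (1/(n−1)) Σ_{m₁+⋯+m_{n−1}=n−2, 0 ≤ mᵢ ≤ α−1} ∏ᵢ 1/(mᵢ!)`. -/
noncomputable def rootedTrees (α n : ℕ) : ℝ :=
  (1 / (n - 1 : ℝ)) *
    ∑ f ∈ (Fintype.piFinset fun _ : Fin (n - 1) => Finset.range α) |>.filter
        (fun f => ∑ i, f i = n - 2),
      ∏ i, (1 : ℝ) / (Nat.factorial (f i))

namespace RT

noncomputable def phi (α : ℕ) : ℝ⟦X⟧ :=
  PowerSeries.mk fun m => if m < α then (1 : ℝ) / m.factorial else 0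

lemma coeff_phi (α m : ℕ) :
    coeff m (phi α) = if m < α then (1 : ℝ) / m.factorial else 0 := coeff_mk _ _

lemma constantCoeff_phi {α : ℕ} (hα : 1 ≤ α) : constantCoeff (phi α) = 1 := by
  rw [← coeff_zero_eq_constantCoeff, coeff_phi]
  simp [hα, Nat.lt_of_lt_of_le Nat.zero_lt_one hα]

lemma phi_mul_inv {α : ℕ} (hα : 1 ≤ α) : phi α * (phi α)⁻¹ = 1 :=
  PowerSeries.mul_inv_cancel _ (by rw [constantCoeff_phi hα]; norm_num)

lemma constantCoeff_psi {α : ℕ} (hα : 1 ≤ α) : constantCoeff (phi α)⁻¹ = 1 := by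
  rw [PowerSeries.constantCoeff_inv, constantCoeff_phi hα]; norm_num

/-- `G = X / φ`. -/
noncomputable def G (α : ℕ) : ℝ⟦X⟧ := X * (phi α)⁻¹

lemma coeff_G_pow (α k j : ℕ) :
    coeff j (G α ^ k) = if k ≤ j then coeff (j - k) ((phi α)⁻¹ ^ k) else 0 := by
  rw [G, mul_pow, coeff_X_pow_mul']

lemma coeff_G_pow_self {α : ℕ} (hα : 1 ≤ α) (k : ℕ) : coeff k (G α ^ k) = 1 := by
  rw [coeff_G_pow, if_pos le_rfl, Nat.sub_self, coeff_zero_eq_constantCoeff, map_pow,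
    constantCoeff_psi hα, one_pow]

lemma coeff_G_pow_of_lt (α : ℕ) {k j : ℕ} (h : j < k) : coeff j (G α ^ k) = 0 := by
  rw [coeff_G_pow, if_neg (by omega)]

end RT
namespace RT

/-- Coefficients of the compositional inverse of `G`. -/
noncomputable def fc (α : ℕ) : ℕ → ℝ
  | 0 => 0
  | j + 1 => (if j = 0 then 1 else 0)
      - ∑ m ∈ (Finset.range (j + 1)).attach,
          fc α m.1 * coeff (j + 1) (G α ^ m.1)
  decreasing_by exact Finset.mem_range.mp m.2

noncomputable def F (α : ℕ) : ℝ⟦X⟧ := PowerSeries.mk (fc α)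

@[simp] lemma coeff_F (α n : ℕ) : coeff n (F α) = fc α n := coeff_mk _ _

@[simp] lemma constantCoeff_F (α : ℕ) : constantCoeff (F α) = 0 := by
  rw [← coeff_zero_eq_constantCoeff, coeff_F, fc]

/-- `F ∘ G = X`, coefficientwise. -/
lemma ID1 {α : ℕ} (hα : 1 ≤ α) (j : ℕ) :
    ∑ m ∈ Finset.range (j + 1), fc α m * coeff j (G α ^ m)
      = if j = 1 then 1 else 0 := by
  cases j with
  | zero => simp [fc]
  | succ j =>
    rw [Finset.sum_range_succ, coeff_G_pow_self hα, mul_one]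
    have h : fc α (j + 1) = (if j = 0 then 1 else 0)
        - ∑ m ∈ (Finset.range (j + 1)).attach,
            fc α m.1 * coeff (j + 1) (G α ^ m.1) := by
      rw [fc]
    rw [h, Finset.sum_attach (Finset.range (j+1))
      (fun m => fc α m * coeff (j + 1) (G α ^ m))]
    have : (if j = 0 then (1:ℝ) else 0) = if j + 1 = 1 then 1 else 0 := by
      simp
    rw [← this]; ring

end RT
namespace RT

lemma sum_triangle (j : ℕ) (g : ℕ × ℕ → ℝ) (hg : ∀ p : ℕ × ℕ, j < p.1 + p.2 → g p = 0) :
    ∑ k ∈ Finset.range (j + 1), ∑ p ∈ Finset.HasAntidiagonal.antidiagonal k, g p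
      = ∑ p ∈ Finset.range (j + 1) ×ˢ Finset.range (j + 1), g p := by
  rw [Finset.sum_sigma']
  have hfil : ∑ p ∈ Finset.range (j + 1) ×ˢ Finset.range (j + 1), g p
      = ∑ p ∈ (Finset.range (j + 1) ×ˢ Finset.range (j + 1)).filter
          (fun p => p.1 + p.2 ≤ j), g p := by
    symm
    apply Finset.sum_filter_of_ne
    intro x _ hx
    by_contra hc
    exact hx (hg x (by omega))
  rw [hfil]
  apply Finset.sum_nbij' (i := fun x : (_ : ℕ) × ℕ × ℕ => x.2)
    (j := fun p : ℕ × ℕ => (⟨p.1 + p.2, p⟩ : (_ : ℕ) × ℕ × ℕ))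
  · intro a ha
    simp only [Finset.mem_sigma, Finset.mem_range, Finset.HasAntidiagonal.mem_antidiagonal] at ha
    simp only [Finset.mem_filter, Finset.mem_product, Finset.mem_range]
    omega
  · intro b hb
    simp only [Finset.mem_filter, Finset.mem_product, Finset.mem_range] at hb
    simp only [Finset.mem_sigma, Finset.mem_range, Finset.HasAntidiagonal.mem_antidiagonal]
    exact ⟨by omega, trivial⟩
  · intro a ha
    simp only [Finset.mem_sigma, Finset.mem_range, Finset.HasAntidiagonal.mem_antidiagonal] at ha
    exact Sigma.ext (by simp [ha.2]) (by simp)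
  · intro b _
    rfl
  · intro a _
    rfl

/-- Truncated composition `H ∘ G` (partial sum up to degree `j`). -/
noncomputable def P (α : ℕ) (H : ℝ⟦X⟧) (j : ℕ) : ℝ⟦X⟧ :=
  ∑ k ∈ Finset.range (j + 1), C (coeff k H) * G α ^ k

lemma coeff_P (α : ℕ) (H : ℝ⟦X⟧) {u j : ℕ} (h : u ≤ j) :
    coeff u (P α H j) = ∑ k ∈ Finset.range (u + 1), coeff k H * coeff u (G α ^ k) := by
  rw [P, map_sum]
  simp_rw [coeff_C_mul]
  symm
  apply Finset.sum_subset (by intro x hx; simp only [Finset.mem_range] at *; omega)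
  intro x _ hx
  simp only [Finset.mem_range, not_lt] at hx
  rw [coeff_G_pow_of_lt α (by omega), mul_zero]

lemma coeff_P_mul (α : ℕ) (H₁ H₂ : ℝ⟦X⟧) (j : ℕ) :
    coeff j (P α (H₁ * H₂) j) = coeff j (P α H₁ j * P α H₂ j) := by
  rw [coeff_P α _ le_rfl, P, P, Finset.sum_mul_sum, map_sum]
  have h1 : ∀ a b : ℕ, C (coeff a H₁) * G α ^ a * (C (coeff b H₂) * G α ^ b)
      = C (coeff a H₁ * coeff b H₂) * G α ^ (a + b) := by
    intro a b; rw [map_mul, pow_add]; ring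
  calc ∑ k ∈ Finset.range (j + 1), coeff k (H₁ * H₂) * coeff j (G α ^ k)
      = ∑ k ∈ Finset.range (j + 1), ∑ p ∈ Finset.HasAntidiagonal.antidiagonal k,
          coeff p.1 H₁ * coeff p.2 H₂ * coeff j (G α ^ (p.1 + p.2)) := by
        apply Finset.sum_congr rfl; intro k _
        rw [coeff_mul, Finset.sum_mul]
        apply Finset.sum_congr rfl; intro p hp
        rw [Finset.HasAntidiagonal.mem_antidiagonal.mp hp]
    _ = ∑ p ∈ Finset.range (j + 1) ×ˢ Finset.range (j + 1),
          coeff p.1 H₁ * coeff p.2 H₂ * coeff j (G α ^ (p.1 + p.2)) := by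
        apply sum_triangle
        intro p hp; rw [coeff_G_pow_of_lt α hp, mul_zero]
    _ = _ := by
        rw [Finset.sum_product]
        simp_rw [map_sum, h1, coeff_C_mul]

lemma D_eq {α : ℕ} (hα : 1 ≤ α) (m : ℕ) : ∀ j : ℕ,
    ∑ k ∈ Finset.range (j + 1), coeff k (F α ^ m) * coeff j (G α ^ k)
      = if j = m then 1 else 0 := by
  induction m with
  | zero =>
    intro j
    have h0 : ∀ k ∈ Finset.range (j + 1), coeff k ((F α) ^ 0) * coeff j (G α ^ k)
        = if k = 0 then (if j = 0 then (1 : ℝ) else 0) else 0 := by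
      intro k _
      by_cases h : k = 0
      · subst h; simp [coeff_one]
      · simp [coeff_one, h]
    rw [Finset.sum_congr rfl h0, Finset.sum_ite_eq' (Finset.range (j + 1)) 0
      (fun _ => if j = 0 then (1 : ℝ) else 0)]
    simp
  | succ m ih =>
    intro j
    have e1 : coeff j (P α (F α ^ (m + 1)) j)
        = ∑ k ∈ Finset.range (j + 1), coeff k (F α ^ (m + 1)) * coeff j (G α ^ k) :=
      coeff_P α _ le_rfl
    rw [← e1, pow_succ, coeff_P_mul, coeff_mul]
    have e2 : ∀ p ∈ Finset.HasAntidiagonal.antidiagonal j,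
        coeff p.1 (P α (F α ^ m) j) * coeff p.2 (P α (F α) j)
        = if p = (m, 1) then 1 else 0 := by
      intro p hp
      have hp' := Finset.HasAntidiagonal.mem_antidiagonal.mp hp
      rw [coeff_P α _ (by omega), coeff_P α _ (by omega), ih p.1]
      have : ∑ k ∈ Finset.range (p.2 + 1), coeff k (F α) * coeff p.2 (G α ^ k)
          = if p.2 = 1 then 1 else 0 := by
        simp_rw [coeff_F]
        exact ID1 hα p.2
      rw [this]
      by_cases h1 : p.1 = m <;> by_cases h2 : p.2 = 1 <;> simp [Prod.ext_iff, h1, h2]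
    rw [Finset.sum_congr rfl e2, Finset.sum_ite_eq' (Finset.HasAntidiagonal.antidiagonal j)
      ((m, 1) : ℕ × ℕ) (fun _ => (1 : ℝ))]
    simp [eq_comm]

end RT
namespace RT

lemma psi_pow_mul_phi_pow {α : ℕ} (hα : 1 ≤ α) {k j : ℕ} (h : k ≤ j) :
    (phi α)⁻¹ ^ k * phi α ^ j = phi α ^ (j - k) := by
  have : phi α ^ j = phi α ^ k * phi α ^ (j - k) := by
    rw [← pow_add]; congr 1; omega
  rw [this, ← mul_assoc, ← mul_pow, mul_comm ((phi α)⁻¹) (phi α), phi_mul_inv hα, one_pow,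
    one_mul]

lemma deriv_pow_coeff (B : ℝ⟦X⟧) {N i : ℕ} (hN : 1 ≤ N) (hi : 1 ≤ i) :
    (N : ℝ) * coeff (i - 1) (B ^ (N - 1) * d⁄dX ℝ B) = (i : ℝ) * coeff i (B ^ N) := by
  have h1 : d⁄dX ℝ (B ^ N) = N • B ^ (N - 1) • d⁄dX ℝ B := Derivation.leibniz_pow (d⁄dX ℝ) B N
  have hc : ((i - 1 : ℕ) : ℝ) + 1 = i := by
    rw [Nat.cast_sub hi]; push_cast; ring
  calc (N : ℝ) * coeff (i - 1) (B ^ (N - 1) * d⁄dX ℝ B)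
      = coeff (i - 1) (N • (B ^ (N - 1) • d⁄dX ℝ B)) := by
        rw [map_nsmul, nsmul_eq_mul, smul_eq_mul]
    _ = coeff (i - 1) (d⁄dX ℝ (B ^ N)) := by rw [← h1]
    _ = coeff (i - 1 + 1) (B ^ N) * (((i - 1 : ℕ) : ℝ) + 1) := coeff_derivative _ _
    _ = (i : ℝ) * coeff i (B ^ N) := by
        rw [Nat.sub_add_cancel hi, hc]; ring

lemma key_pow {α : ℕ} {i : ℕ} (hi : 1 ≤ i) :
    coeff (i - 1) (phi α ^ (i - 1) * d⁄dX ℝ (phi α)) = coeff i (phi α ^ i) := by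
  have h := deriv_pow_coeff (phi α) hi hi
  have hi' : (i : ℝ) ≠ 0 := Nat.cast_ne_zero.mpr (by omega)
  exact mul_left_cancel₀ hi' h

/-- The auxiliary series `A_j = φ^j - X φ^{j-1} φ'`. -/
noncomputable def Aser (α j : ℕ) : ℝ⟦X⟧ :=
  phi α ^ j - X * (phi α ^ (j - 1) * d⁄dX ℝ (phi α))

lemma residue (α : ℕ) (hα : 1 ≤ α) {k j : ℕ} (hk : 1 ≤ k) (hkj : k ≤ j) :
    coeff j (G α ^ k * Aser α j) = if k = j then 1 else 0 := by
  have hG : G α ^ k * Aser α j = X ^ k * ((phi α)⁻¹ ^ k * Aser α j) := by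
    rw [G, mul_pow]; ring
  rw [hG, coeff_X_pow_mul', if_pos hkj]
  rcases eq_or_lt_of_le hkj with rfl | hlt
  · rw [if_pos rfl, Nat.sub_self]
    rw [Aser, mul_sub]
    rw [psi_pow_mul_phi_pow hα le_rfl, Nat.sub_self, pow_zero]
    rw [map_sub]
    have : (phi α)⁻¹ ^ k * (X * (phi α ^ (k - 1) * d⁄dX ℝ (phi α)))
        = X * ((phi α)⁻¹ ^ k * (phi α ^ (k - 1) * d⁄dX ℝ (phi α))) := by ring
    rw [this]
    simp [coeff_zero_eq_constantCoeff, map_mul]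
  · rw [if_neg (by omega)]
    set i := j - k with hidef
    have hi : 1 ≤ i := by omega
    rw [Aser, mul_sub, psi_pow_mul_phi_pow hα (by omega)]
    have e1 : (phi α)⁻¹ ^ k * (X * (phi α ^ (j - 1) * d⁄dX ℝ (phi α)))
        = X * (((phi α)⁻¹ ^ k * phi α ^ (j - 1)) * d⁄dX ℝ (phi α)) := by ring
    rw [e1, psi_pow_mul_phi_pow hα (by omega)]
    have e2 : j - 1 - k = i - 1 := by omega
    rw [e2, map_sub]
    have h4 : i - 1 + 1 = i := by omega
    have e3 : coeff i (X * (phi α ^ (i - 1) * d⁄dX ℝ (phi α)))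
        = coeff (i - 1) (phi α ^ (i - 1) * d⁄dX ℝ (phi α)) := by
      rw [← h4]
      exact coeff_succ_X_mul _ _
    rw [e3, key_pow hi, sub_self]

end RT
namespace RT

/-- Lagrange–Bürmann: `j * [X^j] F^m = m * [X^{j-m}] φ^j`. -/
lemma main {α : ℕ} (hα : 1 ≤ α) {m j : ℕ} (hm : 1 ≤ m) (hmj : m ≤ j) :
    (j : ℝ) * coeff j (F α ^ m) = (m : ℝ) * coeff (j - m) (phi α ^ j) := by
  have hj : 1 ≤ j := le_trans hm hmj
  -- step (a): S = coeff j (F^m)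
  have ha : coeff j (P α (F α ^ m) j * Aser α j) = coeff j (F α ^ m) := by
    rw [P, Finset.sum_mul, map_sum]
    have hterm : ∀ k ∈ Finset.range (j + 1),
        coeff j (C (coeff k (F α ^ m)) * G α ^ k * Aser α j)
        = if k = j then coeff j (F α ^ m) else 0 := by
      intro k hk2
      rw [Finset.mem_range] at hk2
      rw [mul_assoc, coeff_C_mul]
      rcases Nat.eq_zero_or_pos k with rfl | hk
      · have hz : coeff 0 (F α ^ m) = 0 := by
          rw [coeff_zero_eq_constantCoeff, map_pow, constantCoeff_F, zero_pow (by omega)]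
        rw [hz, zero_mul, if_neg (by omega)]
      · by_cases hkj' : k ≤ j
        · rw [residue α hα hk hkj']
          by_cases h : k = j <;> simp [h]
        · exact absurd (by omega) hkj'
    rw [Finset.sum_congr rfl hterm, Finset.sum_ite_eq' (Finset.range (j + 1)) j
      (fun _ => coeff j (F α ^ m))]
    simp
  -- step (b): S = coeff (j-m) (Aser α j)
  have hb : coeff j (P α (F α ^ m) j * Aser α j) = coeff (j - m) (Aser α j) := by
    rw [coeff_mul]
    have hterm : ∀ p ∈ Finset.HasAntidiagonal.antidiagonal j,
        coeff p.1 (P α (F α ^ m) j) * coeff p.2 (Aser α j)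
        = if p = ((m, j - m) : ℕ × ℕ) then coeff (j - m) (Aser α j) else 0 := by
      intro p hp
      have hp' := Finset.HasAntidiagonal.mem_antidiagonal.mp hp
      rw [coeff_P α _ (by omega), D_eq hα m p.1]
      by_cases h : p.1 = m
      · have h2 : p.2 = j - m := by omega
        rw [if_pos h, one_mul, if_pos (by rw [Prod.ext_iff]; exact ⟨h, h2⟩), h2]
      · rw [if_neg h, zero_mul, if_neg (by rw [Prod.ext_iff]; push_neg; intro hc; omega)]
    rw [Finset.sum_congr rfl hterm, Finset.sum_ite_eq' (Finset.HasAntidiagonal.antidiagonal j)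
      ((m, j - m) : ℕ × ℕ) (fun _ => coeff (j - m) (Aser α j))]
    rw [if_pos (by rw [Finset.HasAntidiagonal.mem_antidiagonal]; omega)]
  -- step (c): compute coeff (j-m) (Aser α j)
  have hc : (j : ℝ) * coeff (j - m) (Aser α j) = (m : ℝ) * coeff (j - m) (phi α ^ j) := by
    rw [Aser, map_sub]
    rcases eq_or_lt_of_le hmj with rfl | hlt
    · rw [Nat.sub_self]
      have : coeff 0 (X * (phi α ^ (m - 1) * d⁄dX ℝ (phi α))) = 0 := by
        rw [coeff_zero_eq_constantCoeff, map_mul, constantCoeff_X, zero_mul]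
      rw [this, sub_zero]
    · have hjm : 1 ≤ j - m := by omega
      have h4 : j - m - 1 + 1 = j - m := by omega
      have e3 : coeff (j - m) (X * (phi α ^ (j - 1) * d⁄dX ℝ (phi α)))
          = coeff (j - m - 1) (phi α ^ (j - 1) * d⁄dX ℝ (phi α)) := by
        rw [← h4]
        exact coeff_succ_X_mul _ _
      have e4 := deriv_pow_coeff (phi α) (N := j) (i := j - m) hj hjm
      rw [e3, mul_sub]
      rw [show (j - m - 1) = (j - m) - 1 from rfl] at e4 ⊢
      -- j * coeff (j-m-1) (φ^{j-1} φ') = (j - m) * coeff (j-m) (φ^j)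
      rw [e4]
      have : ((j - m : ℕ) : ℝ) = (j : ℝ) - m := by
        rw [Nat.cast_sub hmj]
      rw [this]; ring
  rw [← ha, hb]; exact hc

end RT
namespace RT

lemma coeff_F_pow_zero {α : ℕ} : ∀ {m j : ℕ}, j < m → coeff j (F α ^ m) = 0 := by
  intro m
  induction m with
  | zero => intro j h; omega
  | succ m ih =>
    intro j h
    rw [pow_succ, coeff_mul]
    apply Finset.sum_eq_zero
    intro p hp
    have hp' := Finset.HasAntidiagonal.mem_antidiagonal.mp hp
    by_cases h1 : p.1 < m
    · rw [ih h1, zero_mul]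
    · have : p.2 = 0 := by omega
      rw [this, coeff_F]
      have : fc α 0 = 0 := by rw [fc]
      rw [this, mul_zero]

lemma fc_one (α : ℕ) : fc α 1 = 1 := by
  rw [fc]
  rw [Finset.sum_attach (Finset.range 1) (fun m => fc α m * coeff 1 (G α ^ m))]
  simp [fc]

/-- Helper summand for the functional equation. -/
noncomputable def hfun (α j γ : ℕ) : ℝ :=
  if 1 ≤ γ ∧ γ < α ∧ γ ≤ j then (γ : ℝ) / γ.factorial * coeff (j - γ) (phi α ^ j) else 0

lemma FE {α : ℕ} (hα : 1 ≤ α) {N : ℕ} (hN : 1 ≤ N) :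
    fc α N = ∑ γ ∈ Finset.range α, (1 / (Nat.factorial γ : ℝ)) * coeff (N - 1) (F α ^ γ) := by
  rcases Nat.lt_or_ge N 2 with hN2 | hN2
  · -- N = 1
    have hN1 : N = 1 := by omega
    subst hN1
    have hterm : ∀ γ ∈ Finset.range α, (1 / (Nat.factorial γ : ℝ)) * coeff (1 - 1) (F α ^ γ)
        = if γ = 0 then 1 else 0 := by
      intro γ _
      rcases Nat.eq_zero_or_pos γ with rfl | hγ
      · simp
      · rw [coeff_F_pow_zero (by omega), mul_zero, if_neg (by omega)]
    rw [Finset.sum_congr rfl hterm, Finset.sum_ite_eq' (Finset.range α) 0 (fun _ => (1 : ℝ))]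
    rw [if_pos (Finset.mem_range.mpr (by omega)), fc_one]
  · -- N ≥ 2
    set j := N - 1 with hj
    have hj1 : 1 ≤ j := by omega
    have hNj : N = j + 1 := by omega
    have hLHS : ∀ γ ∈ Finset.range α,
        (j : ℝ) * ((1 / (Nat.factorial γ : ℝ)) * coeff j (F α ^ γ)) = hfun α j γ := by
      intro γ hγ
      rw [Finset.mem_range] at hγ
      rcases Nat.eq_zero_or_pos γ with rfl | hγ1
      · simp only [hfun]
        rw [pow_zero, coeff_one, if_neg (show ¬ j = 0 by omega),
          if_neg (show ¬(1 ≤ 0 ∧ 0 < α ∧ 0 ≤ j) by omega)]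
        ring
      · by_cases hγj : γ ≤ j
        · have hmain := main hα hγ1 hγj
          simp only [hfun]
          rw [if_pos ⟨hγ1, hγ, hγj⟩]
          calc (j : ℝ) * ((1 / (Nat.factorial γ : ℝ)) * coeff j (F α ^ γ))
              = (1 / (Nat.factorial γ : ℝ)) * ((j : ℝ) * coeff j (F α ^ γ)) := by ring
            _ = (1 / (Nat.factorial γ : ℝ)) * ((γ : ℝ) * coeff (j - γ) (phi α ^ j)) := by
                rw [hmain]
            _ = (γ : ℝ) / γ.factorial * coeff (j - γ) (phi α ^ j) := by ring
        · rw [coeff_F_pow_zero (by omega)]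
          simp only [hfun]
          rw [if_neg (show ¬(1 ≤ γ ∧ γ < α ∧ γ ≤ j) by omega)]
          ring
    have hRHS : coeff (j - 1) (d⁄dX ℝ (phi α) * phi α ^ j)
        = ∑ s ∈ Finset.range j, hfun α j (s + 1) := by
      rw [coeff_mul, Finset.Nat.sum_antidiagonal_eq_sum_range_succ_mk]
      have hj2 : (j - 1).succ = j := by omega
      rw [hj2]
      apply Finset.sum_congr rfl
      intro s hs
      rw [Finset.mem_range] at hs
      dsimp only
      have e1 : coeff s (d⁄dX ℝ (phi α))
          = (if s + 1 < α then (1 : ℝ) / (s + 1).factorial else 0) * ((s : ℝ) + 1) := by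
        rw [coeff_derivative, coeff_phi]
      rw [e1]
      simp only [hfun]
      by_cases hsα : s + 1 < α
      · rw [if_pos hsα, if_pos (show 1 ≤ s + 1 ∧ s + 1 < α ∧ s + 1 ≤ j by omega)]
        have e2 : j - 1 - s = j - (s + 1) := by omega
        rw [e2]
        push_cast
        ring
      · rw [if_neg hsα, if_neg (show ¬(1 ≤ s + 1 ∧ s + 1 < α ∧ s + 1 ≤ j) by omega)]
        ring
    have hbig : ∑ γ ∈ Finset.range α, hfun α j γ = ∑ γ ∈ Finset.range (j + 1), hfun α j γ := by
      have l1 : ∑ γ ∈ Finset.range α, hfun α j γ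
          = ∑ γ ∈ Finset.range (α + j + 1), hfun α j γ := by
        apply Finset.sum_subset (by intro x hx; rw [Finset.mem_range] at *; omega)
        intro x _ hx
        rw [Finset.mem_range, not_lt] at hx
        simp only [hfun]
        rw [if_neg (by omega)]
      have l2 : ∑ γ ∈ Finset.range (j + 1), hfun α j γ
          = ∑ γ ∈ Finset.range (α + j + 1), hfun α j γ := by
        apply Finset.sum_subset (by intro x hx; rw [Finset.mem_range] at *; omega)
        intro x _ hx
        rw [Finset.mem_range, not_lt] at hx
        simp only [hfun]
        rw [if_neg (by omega)]
      rw [l1, l2]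
    have hsum : (j : ℝ) * ∑ γ ∈ Finset.range α, (1 / (Nat.factorial γ : ℝ)) * coeff j (F α ^ γ)
        = coeff (j - 1) (d⁄dX ℝ (phi α) * phi α ^ j) := by
      rw [Finset.mul_sum, Finset.sum_congr rfl hLHS, hRHS, hbig, Finset.sum_range_succ']
      have h0 : hfun α j 0 = 0 := by
        simp only [hfun]
        rw [if_neg (by omega)]
      rw [h0, add_zero]
    have e4 := deriv_pow_coeff (phi α) (N := j + 1) (i := j) (by omega) hj1
    have e5 : (j + 1 : ℕ) - 1 = j := by omega
    rw [e5] at e4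
    have hmain1 := main hα (le_refl 1) (by omega : 1 ≤ N)
    rw [pow_one, coeff_F] at hmain1
    have hjR : (j : ℝ) ≠ 0 := Nat.cast_ne_zero.mpr (by omega)
    apply mul_left_cancel₀ hjR
    rw [hsum]
    have e7 : (N : ℝ) * fc α N = coeff (N - 1) (phi α ^ N) := by
      rw [hmain1]; ring
    have e9 : coeff j (phi α ^ (j + 1)) = (N : ℝ) * fc α N := by
      rw [e7, hNj]
      norm_num
    have e8 : coeff (j - 1) (d⁄dX ℝ (phi α) * phi α ^ j)
        = coeff (j - 1) (phi α ^ j * d⁄dX ℝ (phi α)) := by rw [mul_comm]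
    have hN1R : ((j : ℝ) + 1) ≠ 0 := by positivity
    rw [e8]
    apply mul_left_cancel₀ hN1R
    have e4' : ((j : ℝ) + 1) * coeff (j - 1) (phi α ^ j * d⁄dX ℝ (phi α))
        = (j : ℝ) * coeff j (phi α ^ (j + 1)) := by
      push_cast at e4 ⊢
      linarith [e4]
    rw [e4', e9, hNj]
    push_cast
    ring

end RT
namespace RT

/-- Coefficient of a power as a sum over tuples. -/
lemma coeff_pow_piFinset (g : ℝ⟦X⟧) (K N : ℕ) :
    coeff N (g ^ K)
      = ∑ t ∈ (Fintype.piFinset fun _ : Fin K => Finset.range (N + 1)) |>.filter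
          (fun t => ∑ i, t i = N), ∏ i, coeff (t i) g := by
  have h0 : g ^ K = ∏ _i : Fin K, g := by
    rw [Finset.prod_const, Finset.card_univ, Fintype.card_fin]
  rw [h0, coeff_prod]
  apply Finset.sum_nbij' (i := fun l : Fin K →₀ ℕ => (l : Fin K → ℕ))
    (j := fun t => Finsupp.equivFunOnFinite.symm t)
  · intro l hl
    rw [Finset.mem_finsuppAntidiag] at hl
    rw [Finset.mem_filter]
    constructor
    · rw [Fintype.mem_piFinset]
      intro i
      rw [Finset.mem_range]
      have h1 : l i ≤ ∑ k : Fin K, l k := Finset.single_le_sum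
        (f := fun k => l k) (fun k _ => Nat.zero_le _) (Finset.mem_univ i)
      have h2 : l i ≤ N := le_of_le_of_eq h1 hl.1
      omega
    · exact hl.1
  · intro t ht
    rw [Finset.mem_filter] at ht
    rw [Finset.mem_finsuppAntidiag]
    constructor
    · rw [show ⇑(Finsupp.equivFunOnFinite.symm t) = t from rfl]
      exact ht.2
    · exact Finset.subset_univ _
  · intro l _
    exact Finsupp.equivFunOnFinite_symm_coe l
  · intro t _
    rfl
  · intro l _
    rfl

end RT
namespace RT

lemma sum_piFinset_extend {K A B N : ℕ} (hAB : A ≤ B) (v : ℕ → ℝ)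
    (hv : ∀ t : Fin K → ℕ, (∑ i, t i = N) → (∃ i, A ≤ t i ∧ t i < B) → ∏ i, v (t i) = 0) :
    ∑ t ∈ (Fintype.piFinset fun _ : Fin K => Finset.range B).filter
        (fun t => ∑ i, t i = N), ∏ i, v (t i)
      = ∑ t ∈ (Fintype.piFinset fun _ : Fin K => Finset.range A).filter
          (fun t => ∑ i, t i = N), ∏ i, v (t i) := by
  symm
  apply Finset.sum_subset
  · apply Finset.filter_subset_filter
    intro t ht
    rw [Fintype.mem_piFinset] at *
    intro i
    have := ht i
    rw [Finset.mem_range] at *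
    omega
  · intro t ht hnt
    rw [Finset.mem_filter, Fintype.mem_piFinset] at ht
    have hex : ∃ i, A ≤ t i := by
      by_contra hc
      push_neg at hc
      exact hnt (by
        rw [Finset.mem_filter, Fintype.mem_piFinset]
        exact ⟨fun i => Finset.mem_range.mpr (hc i), ht.2⟩)
    obtain ⟨i, hi⟩ := hex
    have hiB : t i < B := by
      have := ht.1 i
      rw [Finset.mem_range] at this
      omega
    exact hv t ht.2 ⟨i, hi, hiB⟩

end RT

namespace RT

lemma rootedTrees_eq {α : ℕ} (hα : 1 ≤ α) {k : ℕ} (hk : 2 ≤ k) :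
    rootedTrees α k = fc α (k - 1) := by
  have hmain := main hα (le_refl 1) (show 1 ≤ k - 1 by omega)
  rw [pow_one, coeff_F] at hmain
  set v : ℕ → ℝ := fun x => if x < α then (1 : ℝ) / x.factorial else 0 with hv
  have hS : ∑ f ∈ (Fintype.piFinset fun _ : Fin (k - 1) => Finset.range α) |>.filter
        (fun f => ∑ i, f i = k - 2), ∏ i, (1 : ℝ) / (Nat.factorial (f i))
      = coeff (k - 2) (phi α ^ (k - 1)) := by
    have s1 : ∑ f ∈ (Fintype.piFinset fun _ : Fin (k - 1) => Finset.range α) |>.filter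
          (fun f => ∑ i, f i = k - 2), ∏ i, (1 : ℝ) / (Nat.factorial (f i))
        = ∑ f ∈ (Fintype.piFinset fun _ : Fin (k - 1) => Finset.range α) |>.filter
          (fun f => ∑ i, f i = k - 2), ∏ i, v (f i) := by
      apply Finset.sum_congr rfl
      intro f hf
      rw [Finset.mem_filter, Fintype.mem_piFinset] at hf
      apply Finset.prod_congr rfl
      intro i _
      have := hf.1 i
      rw [Finset.mem_range] at this
      rw [hv]
      simp only [if_pos this]
    have s2 : ∑ f ∈ (Fintype.piFinset fun _ : Fin (k - 1) => Finset.range (α + k)) |>.filter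
          (fun f => ∑ i, f i = k - 2), ∏ i, v (f i)
        = ∑ f ∈ (Fintype.piFinset fun _ : Fin (k - 1) => Finset.range α) |>.filter
          (fun f => ∑ i, f i = k - 2), ∏ i, v (f i) :=
      sum_piFinset_extend (by omega) v (by
        intro t _ ⟨i, hi, _⟩
        apply Finset.prod_eq_zero (Finset.mem_univ i)
        rw [hv]
        simp only [if_neg (by omega : ¬ t i < α)])
    have s3 : ∑ f ∈ (Fintype.piFinset fun _ : Fin (k - 1) => Finset.range (α + k)) |>.filter
          (fun f => ∑ i, f i = k - 2), ∏ i, v (f i)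
        = ∑ f ∈ (Fintype.piFinset fun _ : Fin (k - 1) => Finset.range (k - 2 + 1)) |>.filter
          (fun f => ∑ i, f i = k - 2), ∏ i, v (f i) :=
      sum_piFinset_extend (by omega) v (by
        intro t hsum ⟨i, hi, _⟩
        exfalso
        have h1 : t i ≤ ∑ j : Fin (k - 1), t j := Finset.single_le_sum
          (f := fun j => t j) (fun j _ => Nat.zero_le _) (Finset.mem_univ i)
        omega)
    have s4 : ∑ f ∈ (Fintype.piFinset fun _ : Fin (k - 1) => Finset.range (k - 2 + 1)) |>.filter
          (fun f => ∑ i, f i = k - 2), ∏ i, v (f i)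
        = coeff (k - 2) (phi α ^ (k - 1)) := by
      rw [coeff_pow_piFinset]
      apply Finset.sum_congr rfl
      intro f _
      apply Finset.prod_congr rfl
      intro i _
      rw [coeff_phi, hv]
    rw [s1, ← s2, s3, s4]
  rw [rootedTrees, hS]
  have hk2 : k - 1 - 1 = k - 2 := by omega
  rw [hk2, Nat.cast_one, one_mul] at hmain
  rw [← hmain]
  have hcast : ((k : ℝ) - 1) = ((k - 1 : ℕ) : ℝ) := by
    rw [Nat.cast_sub (by omega)]
    norm_num
  have hne : ((k : ℝ) - 1) ≠ 0 := by rw [hcast]; exact Nat.cast_ne_zero.mpr (by omega)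
  rw [hcast]
  rw [one_div, inv_mul_cancel_left₀ (by rw [← hcast]; exact hne : ((k - 1 : ℕ) : ℝ) ≠ 0)]


end RT
namespace RT

lemma inner_eq {α : ℕ} (hα : 1 ≤ α) {n : ℕ} (hn : 2 ≤ n) (γ : ℕ) :
    ∑ t ∈ (Fintype.piFinset fun _ : Fin γ => Finset.Icc 2 (n + γ)) |>.filter
        (fun t => ∑ i, t i = n + γ - 2), ∏ i, rootedTrees α (t i)
    = coeff (n - 2) (F α ^ γ) := by
  rw [coeff_pow_piFinset]
  simp_rw [coeff_F]
  have step1 : ∑ l ∈ (Fintype.piFinset fun _ : Fin γ => Finset.range (n - 2 + 1)) |>.filter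
        (fun l => ∑ i, l i = n - 2), ∏ i, fc α (l i)
      = ∑ l ∈ ((Fintype.piFinset fun _ : Fin γ => Finset.range (n - 2 + 1)) |>.filter
          (fun l => ∑ i, l i = n - 2)).filter (fun l => ∀ i, 1 ≤ l i), ∏ i, fc α (l i) := by
    symm
    apply Finset.sum_filter_of_ne
    intro l _ hne
    intro i
    by_contra hc
    apply hne
    apply Finset.prod_eq_zero (Finset.mem_univ i)
    have : l i = 0 := by omega
    rw [this, fc]
  rw [step1]
  apply Finset.sum_nbij' (i := fun t : Fin γ → ℕ => fun idx => t idx - 1)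
    (j := fun l : Fin γ → ℕ => fun idx => l idx + 1)
  · intro t ht
    rw [Finset.mem_filter, Fintype.mem_piFinset] at ht
    obtain ⟨htm, htsum⟩ := ht
    have hbd : ∀ i, 2 ≤ t i ∧ t i ≤ n + γ := by
      intro i
      have := htm i
      rw [Finset.mem_Icc] at this
      exact this
    have hkey : ∀ i : Fin γ, t i ≤ n - 1 := by
      intro i
      have hγ : 1 ≤ γ := i.pos
      have h1 : ∑ k ∈ Finset.univ.erase i, (2 : ℕ) ≤ ∑ k ∈ Finset.univ.erase i, t k :=
        Finset.sum_le_sum (fun k _ => (hbd k).1)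
      rw [Finset.sum_const, Finset.card_erase_of_mem (Finset.mem_univ i),
        Finset.card_univ, Fintype.card_fin, smul_eq_mul] at h1
      have h2 : t i + ∑ k ∈ Finset.univ.erase i, t k = ∑ k, t k :=
        Finset.add_sum_erase Finset.univ t (Finset.mem_univ i)
      have h5 : t i + (γ - 1) * 2 ≤ t i + ∑ k ∈ Finset.univ.erase i, t k :=
        Nat.add_le_add_left h1 _
      rw [h2, htsum] at h5
      omega
    have hsum : ∑ i, (t i - 1) = n - 2 := by
      have e1 : ∑ i, (t i - 1 + 1) = ∑ i, t i :=
        Finset.sum_congr rfl (fun i _ => by have := (hbd i).1; omega)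
      rw [Finset.sum_add_distrib, Finset.sum_const, Finset.card_univ, Fintype.card_fin,
        smul_eq_mul, mul_one] at e1
      rw [htsum] at e1
      omega
    rw [Finset.mem_filter, Finset.mem_filter, Fintype.mem_piFinset]
    refine ⟨⟨fun i => ?_, hsum⟩, fun i => by show 1 ≤ t i - 1; have := (hbd i).1; omega⟩
    rw [Finset.mem_range]
    show t i - 1 < n - 2 + 1
    have := hkey i
    omega
  · intro l hl
    rw [Finset.mem_filter, Finset.mem_filter, Fintype.mem_piFinset] at hl
    obtain ⟨⟨hmem, hsum⟩, hpos⟩ := hl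
    rw [Finset.mem_filter, Fintype.mem_piFinset]
    constructor
    · intro i
      rw [Finset.mem_Icc]
      have h1 := hmem i
      rw [Finset.mem_range] at h1
      have h2 := hpos i
      omega
    · have e1 : ∑ i, (l i + 1) = (∑ i, l i) + γ := by
        rw [Finset.sum_add_distrib, Finset.sum_const, Finset.card_univ, Fintype.card_fin,
          smul_eq_mul, mul_one]
      rw [e1, hsum]
      omega
  · intro t ht
    dsimp only
    rw [Finset.mem_filter, Fintype.mem_piFinset] at ht
    funext i
    have := ht.1 i
    rw [Finset.mem_Icc] at this
    omega
  · intro l _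
    dsimp only
    funext i
    omega
  · intro t ht
    dsimp only
    rw [Finset.mem_filter, Fintype.mem_piFinset] at ht
    apply Finset.prod_congr rfl
    intro i _
    have h1 := ht.1 i
    rw [Finset.mem_Icc] at h1
    rw [rootedTrees_eq hα h1.1]

end RT

/-- **Recursion relation for rooted branched polymers.**
For `α ≥ 2` and `n ≥ 2`,
`r_α(n) = Σ_{γ=0}^{α−1} (1/γ!) Σ_{n₁,…,n_γ ≥ 2, Σ nᵢ = n+γ−2} ∏ᵢ r_α(nᵢ)`
(for `γ = 0` the inner term is `1` if `n = 2` and `0` otherwise). -/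
theorem rootedTrees_recursion (α n : ℕ) (hα : 2 ≤ α) (hn : 2 ≤ n) :
    rootedTrees α n
      = ∑ γ ∈ Finset.range α, (1 / (Nat.factorial γ : ℝ)) *
          ∑ t ∈ (Fintype.piFinset fun _ : Fin γ => Finset.Icc 2 (n + γ)) |>.filter
              (fun t => ∑ i, t i = n + γ - 2),
            ∏ i, rootedTrees α (t i) := by
  have hα1 : 1 ≤ α := by omega
  rw [RT.rootedTrees_eq hα1 hn, RT.FE hα1 (show 1 ≤ n - 1 by omega)]
  have h12 : n - 1 - 1 = n - 2 := by omega
  rw [h12]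
  apply Finset.sum_congr rfl
  intro γ _
  rw [RT.inner_eq hα1 hn γ]
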